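/- Let V be a commutative unital ring with idempotent ideal 𝔪. An injective V-module Q is closed (the canonical map Q → Hom_V(𝔪, Q) is an isomorphism) if and only if Q has no nonzero elements annihilated by 𝔪, i.e. Hom_V(V/𝔪, Q) = 0. -/

import Mathlib

open TensorProduct

variable {V : Type*} [CommRing V]

/-- The canonical multiplication map `μ : 𝔪 ⊗[V] M → M`, `a ⊗ x ↦ a • x`. -/
noncomputable def smulMap (𝔪 : Ideal V) (M : Type*) [AddCommGroup M] [Module V M] :
    ↥𝔪 ⊗[V] M →ₗ[V] M :=
  TensorProduct.lift ((LinearMap.lsmul V M).comp 𝔪.subtype)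

/-- The canonical map `μ' : M → Hom_V(𝔪, M)`, `x ↦ (a ↦ a • x)`. -/
noncomputable def closedMap (𝔪 : Ideal V) (M : Type*) [AddCommGroup M] [Module V M] :
    M →ₗ[V] (↥𝔪 →ₗ[V] M) :=
  ((LinearMap.lsmul V M).comp 𝔪.subtype).flip

/-- A module is almost zero if it is killed by 𝔪. -/
def AlmostZero (𝔪 : Ideal V) (N : Type*) [AddCommGroup N] [Module V N] : Prop :=
  ∀ a ∈ 𝔪, ∀ y : N, a • y = 0

/-- Key surjectivity step: if `Q` is injective (in the universe-polymorphic sense of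
`Module.Injective`) and has no nonzero `𝔪`-torsion, then every `f : 𝔪 →ₗ Q` is given by
multiplication against some `x : Q`.  We transfer the extension problem down to the
(small) quotient of `V` by the annihilator of `Q`. -/
lemma exists_smul_eq.{u, v} {V : Type u} [CommRing V] (𝔪 : Ideal V)
    (Q : Type v) [AddCommGroup Q] [Module V Q] (hQ : Module.Injective V Q)
    (htf : ∀ x : Q, (∀ a ∈ 𝔪, a • x = 0) → x = 0)
    (f : ↥𝔪 →ₗ[V] Q) : ∃ x : Q, ∀ a : ↥𝔪, (a : V) • x = f a := by
  classical
  -- the annihilator of Q, as the kernel of lsmul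
  set Zs : Submodule V V := LinearMap.ker (LinearMap.lsmul V Q) with hZs
  have hZ : ∀ z ∈ Zs, ∀ q : Q, z • q = 0 := by
    intro z hz q
    have : LinearMap.lsmul V Q z = 0 := LinearMap.mem_ker.mp hz
    simpa using congrArg (fun l : Q →ₗ[V] Q => l q) this
  -- V ⧸ Zs is small (it embeds into Q →ₗ[V] Q)
  have hinj : Function.Injective (Zs.liftQ (LinearMap.lsmul V Q) le_rfl) := by
    rw [← LinearMap.ker_eq_bot]
    exact Submodule.ker_liftQ_eq_bot _ _ _ le_rfl
  haveI hsmallV := small_of_injective hinj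
  -- K = elements of 𝔪 annihilating Q
  set K : Submodule V ↥𝔪 := Zs.comap 𝔪.subtype with hK
  have hKf : K ≤ LinearMap.ker f := by
    intro a ha
    rw [LinearMap.mem_ker]
    apply htf
    intro b hb
    have h1 : b • a = (a : V) • (⟨b, hb⟩ : ↥𝔪) := by
      ext
      simpa using mul_comm b (a : V)
    calc b • f a = f (b • a) := (map_smul f b a).symm
      _ = f ((a : V) • (⟨b, hb⟩ : ↥𝔪)) := by rw [h1]
      _ = (a : V) • f ⟨b, hb⟩ := map_smul f _ _
      _ = 0 := hZ _ (Submodule.mem_comap.mp ha) _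
  -- the induced injection 𝔪⧸K → V⧸Zs
  have hker : LinearMap.ker (Zs.mkQ ∘ₗ 𝔪.subtype) = K := by
    rw [LinearMap.ker_comp, Submodule.ker_mkQ]
  set jb : (↥𝔪 ⧸ K) →ₗ[V] V ⧸ Zs := K.liftQ (Zs.mkQ ∘ₗ 𝔪.subtype) hker.ge with hjb
  have hjbinj : Function.Injective jb := by
    rw [← LinearMap.ker_eq_bot]
    exact Submodule.ker_liftQ_eq_bot _ _ _ hker.le
  haveI hsmallm := small_of_injective hjbinj
  -- the induced map 𝔪⧸K → Q
  set g : (↥𝔪 ⧸ K) →ₗ[V] Q := K.liftQ f hKf with hg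
  -- shrink everything to Q's universe and apply injectivity of Q
  set eX := Shrink.linearEquiv V (↥𝔪 ⧸ K) with heX
  set eY := Shrink.linearEquiv V (V ⧸ Zs) with heY
  set F : Shrink.{v} (↥𝔪 ⧸ K) →ₗ[V] Shrink.{v} (V ⧸ Zs) :=
    eY.symm.toLinearMap ∘ₗ jb ∘ₗ eX.toLinearMap with hF
  have hFinj : Function.Injective F := by
    simp only [hF, LinearMap.coe_comp, LinearEquiv.coe_coe]
    exact eY.symm.injective.comp (hjbinj.comp eX.injective)
  obtain ⟨h, hh⟩ := hQ.out F hFinj (g ∘ₗ eX.toLinearMap)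
  refine ⟨h (eY.symm (Zs.mkQ 1)), ?_⟩
  intro a
  have key : (a : V) • eY.symm (Zs.mkQ 1) = F (eX.symm (K.mkQ a)) := by
    apply eY.injective
    simp only [hF, LinearMap.coe_comp, LinearEquiv.coe_coe, Function.comp_apply,
      LinearEquiv.apply_symm_apply, map_smul]
    simp [hjb, Submodule.liftQ_apply, Submodule.mkQ_apply]
    rw [show (1 : V ⧸ Zs) = Submodule.Quotient.mk (1 : V) from rfl,
      ← Submodule.Quotient.mk_smul, smul_eq_mul, mul_one]
    rfl
  calc (a : V) • h (eY.symm (Zs.mkQ 1))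
      = h ((a : V) • eY.symm (Zs.mkQ 1)) := (map_smul h _ _).symm
    _ = h (F (eX.symm (K.mkQ a))) := by rw [key]
    _ = (g ∘ₗ eX.toLinearMap) (eX.symm (K.mkQ a)) := hh _
    _ = g (K.mkQ a) := by simp
    _ = f a := by simp [hg]

/-- An injective V-module Q is closed iff it has no nonzero element killed by 𝔪
(i.e. Hom_V(V/𝔪, Q) = 0). -/
theorem stmt6 {V : Type*} [CommRing V] (𝔪 : Ideal V) (hm : 𝔪 * 𝔪 = 𝔪)
    (Q : Type*) [AddCommGroup Q] [Module V Q] (hQ : Module.Injective V Q) :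
    Function.Bijective (closedMap 𝔪 Q) ↔ ∀ x : Q, (∀ a ∈ 𝔪, a • x = 0) → x = 0 := by
  constructor
  · intro hbij x hx
    have h0 : closedMap 𝔪 Q x = closedMap 𝔪 Q 0 := by
      ext a
      simpa [closedMap] using hx a a.2
    exact hbij.injective h0
  · intro htf
    constructor
    · intro x y hxy
      have hsub : ∀ a ∈ 𝔪, a • (x - y) = 0 := by
        intro a ha
        have := congrArg (fun l : ↥𝔪 →ₗ[V] Q => l ⟨a, ha⟩) hxy
        simp only [closedMap, LinearMap.flip_apply, LinearMap.coe_comp, Function.comp_apply,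
          LinearMap.lsmul_apply, Submodule.coe_subtype] at this
        simp [smul_sub, this]
      exact sub_eq_zero.mp (htf _ hsub)
    · intro f
      obtain ⟨x, hx⟩ := exists_smul_eq 𝔪 Q hQ htf f
      refine ⟨x, ?_⟩
      ext a
      simpa [closedMap] using hx a
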